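/- Let M be a module over Z[s]/(s^2) and define a*b = -s·b + (1-s)·a and a∘b = s·b + (1+s)·a (i.e. S_b(a) = -sb + (1-s)a, T_b(a) = sb + (1+s)a). Then these operations make M a virtual flat biquandle: the maps S_a, T_a pairwise commute appropriately, S_a = S_{T_b(a)} = S_{S_b(a)}, T_a = T_{S_b(a)} = T_{T_b(a)}, and T_a S_a = S_a T_a = id. -/
import Mathlib


/-- A virtual flat biquandle: a set with two binary operations
`star a b = S_b(a)` and `circ a b = T_b(a)` satisfying
(i) `S_a S_b = S_b S_a`, `T_a T_b = T_b T_a`, `S_a T_b = T_b S_a`;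
(ii) `S_a = S_{T_b(a)} = S_{S_b(a)}`, `T_a = T_{S_b(a)} = T_{T_b(a)}`;
(iii) `T_a S_a = S_a T_a = id`. -/
structure VFB (S : Type*) where
  star : S → S → S
  circ : S → S → S
  star_star_comm : ∀ a b x, star (star x b) a = star (star x a) b
  circ_circ_comm : ∀ a b x, circ (circ x b) a = circ (circ x a) b
  star_circ_comm : ∀ a b x, star (circ x b) a = circ (star x a) b
  star_circ_invar : ∀ a b x, star x (circ a b) = star x a
  star_star_invar : ∀ a b x, star x (star a b) = star x a
  circ_star_invar : ∀ a b x, circ x (star a b) = circ x a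
  circ_circ_invar : ∀ a b x, circ x (circ a b) = circ x a
  circ_star : ∀ a x, circ (star x a) a = x
  star_circ : ∀ a x, star (circ x a) a = x

open DualNumber in
theorem stmt_10 (M : Type*) [AddCommGroup M] [Module (DualNumber ℤ) M] :
    let s : DualNumber ℤ := eps
    ∃ V : VFB M,
      (∀ a b : M, V.star a b = -s • b + (1 - s) • a) ∧
      (∀ a b : M, V.circ a b = s • b + (1 + s) • a) := by
  intro s
  refine ⟨⟨fun a b => -s • b + (1 - s) • a, fun a b => s • b + (1 + s) • a,
    ?_, ?_, ?_, ?_, ?_, ?_, ?_, ?_, ?_⟩, fun a b => rfl, fun a b => rfl⟩ <;>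
    intros <;>
    match_scalars <;> ring_nf <;>
    simp [s, pow_two, DualNumber.eps_mul_eps]
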